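/- Let A ∈ ℝ^{n×n} be such that there exist M ≥ 1 and θ ∈ (0,1) with ‖Aᵏ‖ ≤ M θᵏ for all k ∈ ℕ (operator norm induced by the Euclidean norm), let B ∈ ℝ^{n×m}, and let Ω ⊆ ℝᵐ be a nonempty compact set. Define F̄ = {Σ_{i=0}^∞ Aⁱ B ε_i : ε : ℕ → ℝᵐ, ε_i ∈ Ω for all i}. Let (x_k) be a sequence in ℝⁿ satisfying x_{k+1} = A x_k + u_k + B e_k, where (u_k) is a sequence in ℝⁿ with u_k → 0 and e_k ∈ Ω for all k. Then dist(x_k, F̄) → 0 as k → ∞, where dist denotes the Euclidean distance from a point to a set. -/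

import Mathlib

open Matrix Filter Finset

-- convolution lemma
lemma conv_zero {θ : ℝ} (hθ0 : 0 < θ) (hθ1 : θ < 1) {a : ℕ → ℝ} (ha0 : ∀ j, 0 ≤ a j)
    (ha : Tendsto a atTop (nhds 0)) :
    Tendsto (fun k => ∑ j ∈ range k, θ ^ (k - 1 - j) * a j) atTop (nhds 0) := by
  have hθ0' : (0:ℝ) ≤ θ := hθ0.le
  have hgs : ∀ k : ℕ, ∑ i ∈ range k, θ ^ i ≤ (1 - θ)⁻¹ := fun k =>
    Summable.sum_le_tsum (range k) (fun i _ => pow_nonneg hθ0' i)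
      (summable_geometric_of_lt_one hθ0' hθ1) |>.trans_eq (tsum_geometric_of_lt_one hθ0' hθ1)
  obtain ⟨Cb, hCb⟩ := ha.bddAbove_range
  have hCb' : ∀ j, a j ≤ Cb := fun j => hCb ⟨j, rfl⟩
  rw [Metric.tendsto_atTop] at ha ⊢
  intro ε hε
  have h1θ : (0:ℝ) < 1 - θ := by linarith
  have hε' : 0 < ε * (1 - θ) / 2 := by positivity
  obtain ⟨N, hN⟩ := ha _ hε'
  -- first part small for large k
  have h1 : Tendsto (fun k : ℕ => (N * Cb / θ ^ N) * θ ^ k) atTop (nhds 0) := by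
    simpa using (tendsto_pow_atTop_nhds_zero_of_lt_one hθ0' hθ1).const_mul (N * Cb / θ ^ N)
  rw [Metric.tendsto_atTop] at h1
  obtain ⟨K, hK⟩ := h1 (ε / 2) (by positivity)
  refine ⟨max (N + 1) K, fun k hk => ?_⟩
  have hkN : N ≤ k := le_trans (Nat.le_succ N) (le_trans (le_max_left _ _) hk)
  have hkK : K ≤ k := le_trans (le_max_right _ _) hk
  have hnn : 0 ≤ ∑ j ∈ range k, θ ^ (k - 1 - j) * a j :=
    Finset.sum_nonneg fun j _ => mul_nonneg (pow_nonneg hθ0' _) (ha0 j)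
  rw [Real.dist_eq, sub_zero, abs_of_nonneg hnn]
  have hsplit : ∑ j ∈ range k, θ ^ (k - 1 - j) * a j
      = ∑ j ∈ range N, θ ^ (k - 1 - j) * a j + ∑ j ∈ Ico N k, θ ^ (k - 1 - j) * a j := by
    exact (Finset.sum_range_add_sum_Ico _ hkN).symm
  have hb1 : ∑ j ∈ range N, θ ^ (k - 1 - j) * a j ≤ N * Cb * θ ^ (k - N) := by
    calc ∑ j ∈ range N, θ ^ (k - 1 - j) * a j ≤ ∑ _j ∈ range N, θ ^ (k - N) * Cb := by
          refine Finset.sum_le_sum fun j hj => ?_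
          have hj' : j < N := Finset.mem_range.mp hj
          have : k - N ≤ k - 1 - j := by omega
          exact mul_le_mul (pow_le_pow_of_le_one hθ0' hθ1.le this) (hCb' j) (ha0 j)
            (pow_nonneg hθ0' _)
      _ = N * Cb * θ ^ (k - N) := by rw [Finset.sum_const, card_range]; ring
  have hb1' : (N:ℝ) * Cb * θ ^ (k - N) = (N * Cb / θ ^ N) * θ ^ k := by
    have : θ ^ k = θ ^ (k - N) * θ ^ N := by rw [← pow_add]; congr 1; omega
    field_simp [this]
    rw [this]; ring
  have hb1'' : (N * Cb / θ ^ N) * θ ^ k < ε / 2 := by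
    have := hK k hkK
    rw [Real.dist_eq, sub_zero] at this
    exact (le_abs_self _).trans_lt this
  have hb2 : ∑ j ∈ Ico N k, θ ^ (k - 1 - j) * a j ≤ ε / 2 := by
    calc ∑ j ∈ Ico N k, θ ^ (k - 1 - j) * a j
        ≤ ∑ j ∈ Ico N k, θ ^ (k - 1 - j) * (ε * (1 - θ) / 2) := by
          refine Finset.sum_le_sum fun j hj => ?_
          have hjN : N ≤ j := (Finset.mem_Ico.mp hj).1
          have := hN j hjN
          rw [Real.dist_eq, sub_zero] at this
          exact mul_le_mul_of_nonneg_left ((le_abs_self _).trans this.le) (pow_nonneg hθ0' _)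
      _ ≤ ∑ j ∈ range k, θ ^ (k - 1 - j) * (ε * (1 - θ) / 2) := by
          refine Finset.sum_le_sum_of_subset_of_nonneg ?_ fun j _ _ => by positivity
          rw [Finset.range_eq_Ico]; exact Finset.Ico_subset_Ico (Nat.zero_le _) le_rfl
      _ = (∑ j ∈ range k, θ ^ j) * (ε * (1 - θ) / 2) := by
          rw [← Finset.sum_mul, Finset.sum_range_reflect (fun j => θ ^ j) k]
      _ ≤ (1 - θ)⁻¹ * (ε * (1 - θ) / 2) := by
          refine mul_le_mul_of_nonneg_right (hgs k) (by positivity)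
      _ = ε / 2 := by
          have h1θ' : (1:ℝ) - θ ≠ 0 := ne_of_gt h1θ
          field_simp
  calc ∑ j ∈ range k, θ ^ (k - 1 - j) * a j
      = _ + _ := hsplit
    _ < ε / 2 + ε / 2 := by
        refine add_lt_add_of_lt_of_le (lt_of_le_of_lt (hb1.trans_eq hb1') hb1'') hb2
    _ = ε := by ring

/-- Let `A ∈ ℝ^{n×n}` with `‖Aᵏ‖ ≤ M θᵏ` (`M ≥ 1`, `θ ∈ (0,1)`,
Euclidean operator norm via `Matrix.toEuclideanCLM`), `B ∈ ℝ^{n×m}`, `Ω ⊆ ℝᵐ`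
nonempty compact, and `F̄ = {Σ_{i=0}^∞ Aⁱ B ε_i : ε_i ∈ Ω ∀i}` (a subset of
Euclidean space `ℝⁿ`). If `x_{k+1} = A x_k + u_k + B e_k` with `u_k → 0` and
`e_k ∈ Ω`, then the Euclidean distance from `x_k` to `F̄` tends to `0`. -/
theorem stmt_19 {n m : ℕ} (A : Matrix (Fin n) (Fin n) ℝ) (B : Matrix (Fin n) (Fin m) ℝ)
    (M θ : ℝ) (hM : 1 ≤ M) (hθ : θ ∈ Set.Ioo (0 : ℝ) 1)
    (hA : ∀ k : ℕ, ‖Matrix.toEuclideanCLM (𝕜 := ℝ) (A ^ k)‖ ≤ M * θ ^ k)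
    (Ω : Set (Fin m → ℝ)) (hΩne : Ω.Nonempty) (hΩc : IsCompact Ω)
    (Fbar : Set (EuclideanSpace ℝ (Fin n)))
    (hFbar : Fbar = {x : EuclideanSpace ℝ (Fin n) | ∃ ε : ℕ → Fin m → ℝ, (∀ i : ℕ, ε i ∈ Ω) ∧
      (x : Fin n → ℝ) = ∑' i : ℕ, (A ^ i * B).mulVec (ε i)})
    (x u : ℕ → EuclideanSpace ℝ (Fin n)) (e : ℕ → Fin m → ℝ)
    (hu : Filter.Tendsto u Filter.atTop (nhds 0))
    (he : ∀ k : ℕ, e k ∈ Ω)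
    (hx : ∀ k : ℕ, (x (k + 1) : Fin n → ℝ) =
      A.mulVec (x k) + (EuclideanSpace.equiv (Fin n) ℝ) (u k) + B.mulVec (e k)) :
    Filter.Tendsto (fun k : ℕ => Metric.infDist (x k) Fbar) Filter.atTop (nhds 0) := by
  obtain ⟨hθ0, hθ1⟩ := hθ
  have hθ0' : (0:ℝ) ≤ θ := hθ0.le
  obtain ⟨ω, hω⟩ := hΩne
  set ψ : EuclideanSpace ℝ (Fin n) ≃L[ℝ] (Fin n → ℝ) := EuclideanSpace.equiv (Fin n) ℝ with hψ
  set T : Matrix (Fin n) (Fin n) ℝ → (EuclideanSpace ℝ (Fin n) →L[ℝ] EuclideanSpace ℝ (Fin n)) :=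
    fun C => Matrix.toEuclideanCLM (𝕜 := ℝ) C with hT
  set g : (Fin m → ℝ) → EuclideanSpace ℝ (Fin n) := fun w => ψ.symm (B.mulVec w) with hg
  -- bound on g over Ω
  obtain ⟨C₀, hC₀⟩ : ∃ C₀ : ℝ, ∀ w ∈ Ω, ‖g w‖ ≤ C₀ := by
    have hgc : Continuous g := by
      have : Continuous fun w : Fin m → ℝ => B.mulVec w :=
        B.mulVecLin.continuous_of_finiteDimensional
      exact ψ.symm.continuous.comp this
    exact hΩc.exists_bound_of_continuousOn hgc.continuousOn
  set C : ℝ := max C₀ 0 with hCdef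
  have hC : ∀ w ∈ Ω, ‖g w‖ ≤ C := fun w hw => (hC₀ w hw).trans (le_max_left _ _)
  have hC0 : 0 ≤ C := le_max_right _ _
  -- operator norm bound
  have hTn : ∀ (i : ℕ) (v : EuclideanSpace ℝ (Fin n)), ‖T (A ^ i) v‖ ≤ M * θ ^ i * ‖v‖ := fun i v =>
    ((T (A ^ i)).le_opNorm v).trans (mul_le_mul_of_nonneg_right (hA i) (norm_nonneg v))
  set f : (ℕ → Fin m → ℝ) → ℕ → EuclideanSpace ℝ (Fin n) := fun ε i => T (A ^ i) (g (ε i)) with hf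
  have hfb : ∀ (ε : ℕ → Fin m → ℝ), (∀ i, ε i ∈ Ω) → ∀ i, ‖f ε i‖ ≤ (M * C) * θ ^ i := by
    intro ε hε i
    calc ‖f ε i‖ ≤ M * θ ^ i * ‖g (ε i)‖ := hTn i _
      _ ≤ M * θ ^ i * C := by
          refine mul_le_mul_of_nonneg_left (hC _ (hε i)) ?_
          positivity
      _ = (M * C) * θ ^ i := by ring
  have hsummable : ∀ (ε : ℕ → Fin m → ℝ), (∀ i, ε i ∈ Ω) → Summable (f ε) := by
    intro ε hε
    exact Summable.of_norm_bounded
      ((summable_geometric_of_lt_one hθ0' hθ1).mul_left (M * C)) (hfb ε hε)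
  -- membership
  have hmem : ∀ (ε : ℕ → Fin m → ℝ), (∀ i, ε i ∈ Ω) → (∑' i, f ε i) ∈ Fbar := by
    intro ε hε
    rw [hFbar]
    refine ⟨ε, hε, ?_⟩
    have h1 : ψ (∑' i, f ε i) = ∑' i, ψ (f ε i) := ψ.map_tsum
    have h2 : ∀ i, ψ (f ε i) = (A ^ i * B).mulVec (ε i) := by
      intro i
      show ψ (T (A ^ i) (ψ.symm (B.mulVec (ε i)))) = _
      rw [hψ, hT]
      simp only [EuclideanSpace.equiv, PiLp.continuousLinearEquiv_apply,
        PiLp.coe_continuousLinearEquiv, PiLp.coe_symm_continuousLinearEquiv,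
        Matrix.ofLp_toEuclideanCLM, WithLp.ofLp_toLp]
      rw [Matrix.mulVec_mulVec]
    calc ((∑' i, f ε i : EuclideanSpace ℝ (Fin n)) : Fin n → ℝ) = ψ (∑' i, f ε i) := rfl
      _ = ∑' i, ψ (f ε i) := h1
      _ = ∑' i : ℕ, (A ^ i * B).mulVec (ε i) := by
          exact tsum_congr h2
  -- step equation in EuclideanSpace
  have hstep : ∀ k : ℕ, x (k + 1) = T A (x k) + u k + g (e k) := by
    intro k
    apply ψ.injective
    rw [map_add, map_add]
    have h1 : ψ (T A (x k)) = A.mulVec (ψ (x k)) := by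
      rw [hψ, hT]
      simp only [EuclideanSpace.equiv, PiLp.continuousLinearEquiv_apply,
        PiLp.coe_continuousLinearEquiv, Matrix.ofLp_toEuclideanCLM]
    have h2 : ψ (g (e k)) = B.mulVec (e k) := by
      rw [hg]; exact ψ.apply_symm_apply _
    rw [h1, h2]
    have h3 : ψ (x (k+1)) = A.mulVec (ψ (x k)) + ψ (u k) + B.mulVec (e k) := by
      have := hx k
      exact this
    exact h3
  have hTT : ∀ (p : ℕ) (v : EuclideanSpace ℝ (Fin n)), T A (T (A ^ p) v) = T (A ^ (p + 1)) v := by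
    intro p v
    rw [pow_succ', hT]
    simp only [_root_.map_mul, ContinuousLinearMap.mul_apply]
  have hTone : ∀ v : EuclideanSpace ℝ (Fin n), T (A ^ 0) v = v := by
    intro v
    rw [pow_zero, hT]
    simp
  have hsum_step : ∀ (k : ℕ) (v : ℕ → EuclideanSpace ℝ (Fin n)),
      T A (∑ j ∈ range k, T (A ^ (k - 1 - j)) (v j)) + v k
        = ∑ j ∈ range (k + 1), T (A ^ (k - j)) (v j) := by
    intro k v
    rw [map_sum, Finset.sum_range_succ, Nat.sub_self, hTone (v k)]
    congr 1
    refine Finset.sum_congr rfl fun j hj => ?_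
    have hj' : j < k := Finset.mem_range.mp hj
    have hkj : k - 1 - j + 1 = k - j := by omega
    rw [hTT, hkj]
  have hform : ∀ k : ℕ, x k = T (A ^ k) (x 0)
      + (∑ j ∈ range k, T (A ^ (k - 1 - j)) (u j))
      + (∑ j ∈ range k, T (A ^ (k - 1 - j)) (g (e j))) := by
    intro k
    induction k with
    | zero => simp only [Finset.range_zero, Finset.sum_empty, add_zero, hTone]
    | succ k ih =>
      rw [hstep k, ih, map_add, map_add, hTT]
      have h4 : ∀ j : ℕ, (k + 1) - 1 - j = k - j := fun j => by omega
      simp only [h4]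
      rw [← hsum_step k u, ← hsum_step k (fun j => g (e j))]
      abel
  -- approximating sequences
  set εk : ℕ → ℕ → Fin m → ℝ := fun k i => if i < k then e (k - 1 - i) else ω with hεk
  have hεkΩ : ∀ k i, εk k i ∈ Ω := by
    intro k i
    rw [hεk]
    by_cases h : i < k <;> simp [h, he, hω]
  set y : ℕ → EuclideanSpace ℝ (Fin n) := fun k => ∑' i, f (εk k) i with hy
  have hyF : ∀ k, y k ∈ Fbar := fun k => hmem _ (hεkΩ k)
  -- tail sum
  have hωsum : Summable (fun i : ℕ => T (A ^ i) (g ω)) := by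
    have := hsummable (fun _ => ω) (fun _ => hω)
    exact this
  have hytail : ∀ k : ℕ, y k = (∑ j ∈ range k, T (A ^ (k - 1 - j)) (g (e j)))
      + ∑' i : ℕ, T (A ^ (i + k)) (g ω) := by
    intro k
    show (∑' i, f (εk k) i) = _
    rw [← Summable.sum_add_tsum_nat_add k (hsummable _ (hεkΩ k))]
    congr 1
    · have h5 : ∀ i ∈ range k, f (εk k) i = T (A ^ i) (g (e (k - 1 - i))) := by
        intro i hi
        have hik : i < k := Finset.mem_range.mp hi
        rw [hf, hεk]
        simp [hik]
      rw [Finset.sum_congr rfl h5]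
      have h6 := Finset.sum_range_reflect (fun j => T (A ^ (k - 1 - j)) (g (e j))) k
      rw [← h6]
      refine Finset.sum_congr rfl fun i hi => ?_
      have hik : i < k := Finset.mem_range.mp hi
      have : k - 1 - (k - 1 - i) = i := by omega
      rw [this]
    · refine tsum_congr fun i => ?_
      rw [hf, hεk]
      have : ¬ (i + k < k) := by omega
      simp [this]
  have hdiff : ∀ k : ℕ, x k - y k = T (A ^ k) (x 0)
      + (∑ j ∈ range k, T (A ^ (k - 1 - j)) (u j))
      - ∑' i : ℕ, T (A ^ (i + k)) (g ω) := by
    intro k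
    rw [hform k, hytail k]
    abel
  -- norm of tail
  have htail_norm : ∀ k : ℕ, ‖∑' i : ℕ, T (A ^ (i + k)) (g ω)‖ ≤ M * C * θ ^ k * (1 - θ)⁻¹ := by
    intro k
    have hb : ∀ i : ℕ, ‖T (A ^ (i + k)) (g ω)‖ ≤ (M * C * θ ^ k) * θ ^ i := by
      intro i
      calc ‖T (A ^ (i + k)) (g ω)‖ ≤ M * θ ^ (i + k) * ‖g ω‖ := hTn _ _
        _ ≤ M * θ ^ (i + k) * C := by
            refine mul_le_mul_of_nonneg_left (hC _ hω) ?_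
            positivity
        _ = (M * C * θ ^ k) * θ ^ i := by rw [pow_add]; ring
    have hsb : Summable (fun i : ℕ => (M * C * θ ^ k) * θ ^ i) :=
      (summable_geometric_of_lt_one hθ0' hθ1).mul_left _
    calc ‖∑' i : ℕ, T (A ^ (i + k)) (g ω)‖
        ≤ ∑' i : ℕ, ‖T (A ^ (i + k)) (g ω)‖ := by
          refine norm_tsum_le_tsum_norm ?_
          exact hsb.of_nonneg_of_le (fun i => norm_nonneg _) hb
      _ ≤ ∑' i : ℕ, (M * C * θ ^ k) * θ ^ i := by
          refine Summable.tsum_le_tsum hb (hsb.of_nonneg_of_le (fun i => norm_nonneg _) hb) hsb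
      _ = (M * C * θ ^ k) * (1 - θ)⁻¹ := by
          rw [tsum_mul_left, tsum_geometric_of_lt_one hθ0' hθ1]
  -- the bound
  set bnd : ℕ → ℝ := fun k => M * θ ^ k * ‖x 0‖
      + M * (∑ j ∈ range k, θ ^ (k - 1 - j) * ‖u j‖)
      + M * C * θ ^ k * (1 - θ)⁻¹ with hbnd
  have hle : ∀ k : ℕ, Metric.infDist (x k) Fbar ≤ bnd k := by
    intro k
    have h7 : Metric.infDist (x k) Fbar ≤ dist (x k) (y k) :=
      Metric.infDist_le_dist_of_mem (hyF k)
    rw [dist_eq_norm] at h7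
    refine h7.trans ?_
    rw [hdiff k, hbnd]
    calc ‖T (A ^ k) (x 0) + (∑ j ∈ range k, T (A ^ (k - 1 - j)) (u j))
          - ∑' i : ℕ, T (A ^ (i + k)) (g ω)‖
        ≤ ‖T (A ^ k) (x 0) + (∑ j ∈ range k, T (A ^ (k - 1 - j)) (u j))‖
          + ‖∑' i : ℕ, T (A ^ (i + k)) (g ω)‖ := norm_sub_le _ _
      _ ≤ ‖T (A ^ k) (x 0)‖ + ‖∑ j ∈ range k, T (A ^ (k - 1 - j)) (u j)‖
          + ‖∑' i : ℕ, T (A ^ (i + k)) (g ω)‖ := by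
          gcongr
          exact norm_add_le _ _
      _ ≤ M * θ ^ k * ‖x 0‖ + M * (∑ j ∈ range k, θ ^ (k - 1 - j) * ‖u j‖)
          + M * C * θ ^ k * (1 - θ)⁻¹ := by
          gcongr
          · exact hTn _ _
          · calc ‖∑ j ∈ range k, T (A ^ (k - 1 - j)) (u j)‖
                ≤ ∑ j ∈ range k, ‖T (A ^ (k - 1 - j)) (u j)‖ := norm_sum_le _ _
              _ ≤ ∑ j ∈ range k, M * θ ^ (k - 1 - j) * ‖u j‖ :=
                  Finset.sum_le_sum fun j _ => hTn _ _
              _ = M * (∑ j ∈ range k, θ ^ (k - 1 - j) * ‖u j‖) := by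
                  rw [Finset.mul_sum]
                  exact Finset.sum_congr rfl fun j _ => by ring
          · exact htail_norm k
  -- the bound tends to zero
  have hθpow : Tendsto (fun k : ℕ => θ ^ k) atTop (nhds 0) :=
    tendsto_pow_atTop_nhds_zero_of_lt_one hθ0' hθ1
  have hun : Tendsto (fun j => ‖u j‖) atTop (nhds 0) := by
    simpa using hu.norm
  have hbnd0 : Tendsto bnd atTop (nhds 0) := by
    rw [hbnd]
    have t1 : Tendsto (fun k : ℕ => M * θ ^ k * ‖x 0‖) atTop (nhds 0) := by
      have := (hθpow.const_mul M).mul_const ‖x 0‖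
      simpa using this
    have t2 : Tendsto (fun k : ℕ => M * (∑ j ∈ range k, θ ^ (k - 1 - j) * ‖u j‖)) atTop
        (nhds 0) := by
      have := (conv_zero hθ0 hθ1 (fun j => norm_nonneg (u j)) hun).const_mul M
      simpa using this
    have t3 : Tendsto (fun k : ℕ => M * C * θ ^ k * (1 - θ)⁻¹) atTop (nhds 0) := by
      have := (hθpow.const_mul (M * C)).mul_const (1 - θ)⁻¹
      simpa using this
    have := (t1.add t2).add t3
    simpa using this
  exact squeeze_zero (fun k => Metric.infDist_nonneg) hle hbnd0
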